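/- Fix reals 0 < R₁ < R₂ < R, α > 0, P_T > 0, 𝒩 > 0, γ > 0 and reflection coefficients 0 < ξ₂ ≤ ξ₁ ≤ 1; set κ = ξ₂/ξ₁. Let r₁ on [R₁, R₂] with density 2r/(R₂² − R₁²) and r₂ on [R₂, R] with density 2r/(R² − R₂²) be independent random variables, and let p₁ = P( P_T·ξ₁·r₁^{−2α}/(P_T·ξ₂·r₂^{−2α} + 𝒩) ≥ γ and P_T·ξ₂·r₂^{−2α}/𝒩 < γ ). If γ > P_T·ξ₂·R^{−2α}/𝒩 and R₂^{−2α} ≥ 𝒩·γ/(ξ₁·P_T) + γ·κ·min{R₂^{−2α}, 𝒩·γ/(ξ₂·P_T)}, then p₁ = ( R² − (min{R₂^{−2α}, 𝒩·γ/(ξ₂·P_T)})^{−1/α} ) / (R² − R₂²). -/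

import Mathlib

set_option maxHeartbeats 1000000


open MeasureTheory Set

/-- Two-node pairing, fading-free, with `κ = ξ₂/ξ₁`. `p₁` is the
probability (double integral of the joint density of `r₁`, `r₂` over the event) that
only the stronger (near) signal is successfully decoded. If `γ > P_T·ξ₂·R^{−2α}/𝒩`
and `R₂^{−2α} ≥ 𝒩γ/(ξ₁P_T) + γκ·min{R₂^{−2α}, 𝒩γ/(ξ₂P_T)}`, then
`p₁ = (R² − (min{R₂^{−2α}, 𝒩γ/(ξ₂P_T)})^{−1/α})/(R² − R₂²)`. -/
theorem backcom_p1_second_case_formula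
    (R₁ R₂ R α PT Noise γ ξ₁ ξ₂ κ : ℝ)
    (h0 : 0 < R₁) (h12 : R₁ < R₂) (h2R : R₂ < R)
    (hα : 0 < α) (hPT : 0 < PT) (hNoise : 0 < Noise) (hγ : 0 < γ)
    (hξ2 : 0 < ξ₂) (hξ21 : ξ₂ ≤ ξ₁) (hξ1 : ξ₁ ≤ 1)
    (hκ : κ = ξ₂ / ξ₁)
    (hcond1 : PT * ξ₂ * R ^ (-(2 * α)) / Noise < γ)
    (hcond2 : Noise * γ / (ξ₁ * PT) +
        γ * κ * min (R₂ ^ (-(2 * α))) (Noise * γ / (ξ₂ * PT)) ≤ R₂ ^ (-(2 * α))) :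
    (∫ r₁ in R₁..R₂, ∫ r₂ in R₂..R,
        if γ ≤ PT * ξ₁ * r₁ ^ (-(2 * α)) / (PT * ξ₂ * r₂ ^ (-(2 * α)) + Noise) ∧
            PT * ξ₂ * r₂ ^ (-(2 * α)) / Noise < γ
        then 2 * r₁ / (R₂ ^ 2 - R₁ ^ 2) * (2 * r₂ / (R ^ 2 - R₂ ^ 2)) else 0) =
      (R ^ 2 - (min (R₂ ^ (-(2 * α))) (Noise * γ / (ξ₂ * PT))) ^ (-(1 / α))) /
        (R ^ 2 - R₂ ^ 2) := by
  have hξ1pos : 0 < ξ₁ := lt_of_lt_of_le hξ2 hξ21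
  have hR₂ : 0 < R₂ := h0.trans h12
  have hR : 0 < R := hR₂.trans h2R
  have hαne : (2 : ℝ) * α ≠ 0 := by positivity
  have hneg : -(2 * α) < 0 := by linarith [hα]
  set c := Noise * γ / (ξ₂ * PT) with hc_def
  have hc : 0 < c := by positivity
  set m := min (R₂ ^ (-(2 * α))) c with hm_def
  have hB2 : (0:ℝ) < R₂ ^ (-(2 * α)) := Real.rpow_pos_of_pos hR₂ _
  have hm : 0 < m := lt_min hB2 hc
  set t := c ^ (-(1 / (2 * α))) with ht_def
  have ht : 0 < t := Real.rpow_pos_of_pos hc _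
  have htc : t ^ (-(2 * α)) = c := by
    rw [ht_def, ← Real.rpow_mul hc.le]
    rw [show -(1 / (2 * α)) * -(2 * α) = 1 by field_simp]
    exact Real.rpow_one c
  -- key antitone equivalences
  have hlt : ∀ x y : ℝ, 0 < x → 0 < y → (x ^ (-(2*α)) < y ^ (-(2*α)) ↔ y < x) :=
    fun x y hx hy => Real.rpow_lt_rpow_iff_of_neg hx hy hneg
  set s := max R₂ t with hs_def
  have hs2 : R₂ ≤ s := le_max_left _ _
  have hsR : s < R := by
    refine max_lt h2R ?_
    rw [← hlt R t hR ht, htc]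
    rw [hc_def, lt_div_iff₀ (by positivity)]
    have := (div_lt_iff₀ hNoise).mp hcond1
    nlinarith
  have hsnr : ∀ x : ℝ, (PT * ξ₂ * x / Noise < γ ↔ x < c) := by
    intro x
    rw [div_lt_iff₀ hNoise, hc_def, lt_div_iff₀ (by positivity)]
    constructor <;> intro h <;> nlinarith
  have hcond2' : Noise * γ + γ * PT * ξ₂ * m ≤ PT * ξ₁ * R₂ ^ (-(2 * α)) := by
    have h := mul_le_mul_of_nonneg_right hcond2 (mul_pos hξ1pos hPT).le
    rw [hκ] at h
    have h1 : Noise * γ / (ξ₁ * PT) * (ξ₁ * PT) = Noise * γ := by field_simp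
    have h2 : γ * (ξ₂ / ξ₁) * m * (ξ₁ * PT) = γ * PT * ξ₂ * m := by field_simp
    rw [add_mul, h1, h2] at h
    have h3 : R₂ ^ (-(2 * α)) * (ξ₁ * PT) = PT * ξ₁ * R₂ ^ (-(2 * α)) := by ring
    linarith [h3 ▸ h]
  have A := R₂ ^ 2 - R₁ ^ 2
  have hA : (0:ℝ) < R₂ ^ 2 - R₁ ^ 2 := by nlinarith
  have hB : (0:ℝ) < R ^ 2 - R₂ ^ 2 := by nlinarith
  -- the condition simplification
  have hiff : ∀ r₁ ∈ Ioc R₁ R₂, ∀ r₂ ∈ Ioc R₂ R,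
      ((γ ≤ PT * ξ₁ * r₁ ^ (-(2 * α)) / (PT * ξ₂ * r₂ ^ (-(2 * α)) + Noise) ∧
        PT * ξ₂ * r₂ ^ (-(2 * α)) / Noise < γ) ↔ s < r₂) := by
    rintro r₁ ⟨hr1a, hr1b⟩ r₂ ⟨hr2a, hr2b⟩
    have hr1 : 0 < r₁ := h0.trans hr1a
    have hr2 : 0 < r₂ := hR₂.trans hr2a
    have hden : 0 < PT * ξ₂ * r₂ ^ (-(2 * α)) + Noise := by positivity
    rw [le_div_iff₀ hden, hsnr]
    constructor
    · rintro ⟨-, h2⟩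
      refine max_lt hr2a ?_
      rw [← hlt r₂ t hr2 ht, htc]; exact h2
    · intro hs
      have htr2 : t < r₂ := lt_of_le_of_lt (le_max_right R₂ t) hs
      have h2 : r₂ ^ (-(2*α)) < c := by rw [← htc, hlt r₂ t hr2 ht]; exact htr2
      refine ⟨?_, h2⟩
      have hmono : r₂ ^ (-(2*α)) < R₂ ^ (-(2*α)) :=
        Real.rpow_lt_rpow_of_neg hR₂ hr2a hneg
      have hrm : r₂ ^ (-(2*α)) < m := lt_min hmono h2
      have h1 : R₂ ^ (-(2*α)) ≤ r₁ ^ (-(2*α)) :=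
        Real.rpow_le_rpow_of_nonpos hr1 hr1b hneg.le
      nlinarith [mul_le_mul_of_nonneg_left hrm.le (by positivity : (0:ℝ) ≤ γ * PT * ξ₂),
        mul_le_mul_of_nonneg_left h1 (by positivity : (0:ℝ) ≤ PT * ξ₁)]
  -- integrability helper: step function
  have hstep : ∀ (k a b : ℝ), IntervalIntegrable
      (fun r₂ => if s < r₂ then k * (2 * r₂ / (R ^ 2 - R₂ ^ 2)) else 0) volume a b := by
    intro k a b
    have heq : (fun r₂ => if s < r₂ then k * (2 * r₂ / (R ^ 2 - R₂ ^ 2)) else 0)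
        = (Ioi s).indicator (fun r₂ => k * (2 * r₂ / (R ^ 2 - R₂ ^ 2))) := by
      ext x; simp [indicator, mem_Ioi]
    rw [heq, intervalIntegrable_iff]
    exact ((Continuous.intervalIntegrable (by fun_prop) a b).def').indicator
      measurableSet_Ioi
  -- inner integral computation
  have hinner : ∀ r₁ ∈ Ioc R₁ R₂,
      (∫ r₂ in R₂..R,
        if γ ≤ PT * ξ₁ * r₁ ^ (-(2 * α)) / (PT * ξ₂ * r₂ ^ (-(2 * α)) + Noise) ∧
            PT * ξ₂ * r₂ ^ (-(2 * α)) / Noise < γ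
        then 2 * r₁ / (R₂ ^ 2 - R₁ ^ 2) * (2 * r₂ / (R ^ 2 - R₂ ^ 2)) else 0)
      = 2 * r₁ / (R₂ ^ 2 - R₁ ^ 2) * ((R ^ 2 - s ^ 2) / (R ^ 2 - R₂ ^ 2)) := by
    intro r₁ hr₁
    set k := 2 * r₁ / (R₂ ^ 2 - R₁ ^ 2) with hk_def
    have step1 : (∫ r₂ in R₂..R,
        if γ ≤ PT * ξ₁ * r₁ ^ (-(2 * α)) / (PT * ξ₂ * r₂ ^ (-(2 * α)) + Noise) ∧
            PT * ξ₂ * r₂ ^ (-(2 * α)) / Noise < γ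
        then k * (2 * r₂ / (R ^ 2 - R₂ ^ 2)) else 0)
        = ∫ r₂ in R₂..R, (if s < r₂ then k * (2 * r₂ / (R ^ 2 - R₂ ^ 2)) else 0) := by
      apply intervalIntegral.integral_congr_ae
      filter_upwards with r₂ hr₂
      rw [uIoc_of_le h2R.le] at hr₂
      exact if_congr (hiff r₁ hr₁ r₂ hr₂) rfl rfl
    rw [step1]
    rw [← intervalIntegral.integral_add_adjacent_intervals (b := s)
      (hstep k R₂ s) (hstep k s R)]
    have left0 : (∫ r₂ in R₂..s, (if s < r₂ then k * (2 * r₂ / (R ^ 2 - R₂ ^ 2)) else 0))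
        = 0 := by
      rw [show (0:ℝ) = ∫ r₂ in R₂..s, (0:ℝ) by simp]
      apply intervalIntegral.integral_congr_ae
      filter_upwards with r₂ hr₂
      rw [uIoc_of_le hs2] at hr₂
      simp [not_lt.mpr hr₂.2]
    have right : (∫ r₂ in s..R, (if s < r₂ then k * (2 * r₂ / (R ^ 2 - R₂ ^ 2)) else 0))
        = k * ((R ^ 2 - s ^ 2) / (R ^ 2 - R₂ ^ 2)) := by
      have : (∫ r₂ in s..R, (if s < r₂ then k * (2 * r₂ / (R ^ 2 - R₂ ^ 2)) else 0))
          = ∫ r₂ in s..R, (k * 2 / (R ^ 2 - R₂ ^ 2)) * r₂ := by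
        apply intervalIntegral.integral_congr_ae
        filter_upwards with r₂ hr₂
        rw [uIoc_of_le hsR.le] at hr₂
        rw [if_pos hr₂.1]; ring
      rw [this, intervalIntegral.integral_const_mul, integral_id]
      field_simp
    rw [left0, right, zero_add]
  -- outer integral
  have houter : (∫ r₁ in R₁..R₂, ∫ r₂ in R₂..R,
        if γ ≤ PT * ξ₁ * r₁ ^ (-(2 * α)) / (PT * ξ₂ * r₂ ^ (-(2 * α)) + Noise) ∧
            PT * ξ₂ * r₂ ^ (-(2 * α)) / Noise < γ
        then 2 * r₁ / (R₂ ^ 2 - R₁ ^ 2) * (2 * r₂ / (R ^ 2 - R₂ ^ 2)) else 0)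
      = ∫ r₁ in R₁..R₂,
          2 * r₁ / (R₂ ^ 2 - R₁ ^ 2) * ((R ^ 2 - s ^ 2) / (R ^ 2 - R₂ ^ 2)) := by
    apply intervalIntegral.integral_congr_ae
    filter_upwards with r₁ hr₁
    rw [uIoc_of_le h12.le] at hr₁
    exact hinner r₁ hr₁
  rw [houter]
  have : (∫ r₁ in R₁..R₂,
      2 * r₁ / (R₂ ^ 2 - R₁ ^ 2) * ((R ^ 2 - s ^ 2) / (R ^ 2 - R₂ ^ 2)))
      = ∫ r₁ in R₁..R₂,
        (2 / (R₂ ^ 2 - R₁ ^ 2) * ((R ^ 2 - s ^ 2) / (R ^ 2 - R₂ ^ 2))) * r₁ := by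
    congr 1; ext r₁; ring
  rw [this, intervalIntegral.integral_const_mul, integral_id]
  -- now show the closed form matches
  have hms : m ^ (-(1 / α)) = s ^ 2 := by
    rcases le_or_gt (R₂ ^ (-(2 * α))) c with hcase | hcase
    · have hmeq : m = R₂ ^ (-(2 * α)) := min_eq_left hcase
      have hts : t ≤ R₂ := by
        rw [← Real.rpow_le_rpow_iff_of_neg hR₂ ht hneg, htc]; exact hcase
      have hseq : s = R₂ := max_eq_left hts
      rw [hmeq, hseq, ← Real.rpow_natCast R₂ 2, ← Real.rpow_mul hR₂.le]
      congr 1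
      push_cast
      field_simp
    · have hmeq : m = c := min_eq_right hcase.le
      have hts : R₂ < t := by
        rw [← Real.rpow_lt_rpow_iff_of_neg ht hR₂ hneg, htc]; exact hcase
      have hseq : s = t := max_eq_right hts.le
      rw [hmeq, hseq, ht_def, ← Real.rpow_natCast (c ^ (-(1/(2*α)))) 2,
        ← Real.rpow_mul hc.le]
      congr 1
      push_cast
      field_simp
  rw [hms]
  field_simp
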